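/- Let μ be a probability measure on a Polish space X satisfying the symmetrized transportation-cost inequality 𝒯_c(ν₁, ν₂) ≤ 2H(ν₁|μ) + 2H(ν₂|μ) for all probability measures ν₁, ν₂. Then for all measurable sets A, B with μ(A), μ(B) > 0, one has μ(A)·μ(B) ≤ exp(−c(A,B)/2), where c(A,B) = inf_{x∈A, y∈B} c(x,y). -/

import Mathlib

open MeasureTheory
open scoped Classical

/-- Optimal transportation cost between `ν` and `μ` for the cost `c`. -/
noncomputable def transportCost {X : Type*} [MeasurableSpace X]
    (c : X → X → NNReal) (ν μ : Measure X) : ENNReal :=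
  ⨅ (π : Measure (X × X)) (_ : π.map Prod.fst = ν ∧ π.map Prod.snd = μ),
    ∫⁻ p, (c p.1 p.2 : ENNReal) ∂π

/-- Relative entropy `H(ν | μ) = ∫ log(dν/dμ) dν` if `ν ≪ μ` (and the integral makes
sense), `+∞` otherwise. -/
noncomputable def relEntropy {X : Type*} [MeasurableSpace X] (ν μ : Measure X) : EReal :=
  if  ν ≪ μ ∧ Integrable (llr ν μ) ν then ((∫ x, llr ν μ x ∂ν : ℝ) : EReal) else ⊤

section Aux

open ProbabilityTheory

variable {X : Type*} [MeasurableSpace X]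

lemma relEntropy_cond_aux (μ : Measure X) [IsProbabilityMeasure μ]
    {A : Set X} (hA : MeasurableSet A) (h0 : μ A ≠ 0) :
    relEntropy μ[|A] μ = ((-Real.log (μ A).toReal : ℝ) : EReal) := by
  have : IsProbabilityMeasure μ[|A] := cond_isProbabilityMeasure h0
  have hac : μ[|A] ≪ μ := by
    rw [ProbabilityTheory.cond]
    exact (Measure.absolutelyContinuous_of_le Measure.restrict_le_self).smul_left _
  have hAe : ∀ᵐ x ∂μ[|A], x ∈ A := by
    rw [ae_iff]
    have : μ[|A] Aᶜ = 0 := by rw [cond_apply hA]; simp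
    exact this
  have hwd : μ[|A] = μ.withDensity (A.indicator fun _ => (μ A)⁻¹) := by
    rw [withDensity_indicator hA, withDensity_const, ProbabilityTheory.cond]
  have hrn : μ[|A].rnDeriv μ =ᵐ[μ] A.indicator fun _ => (μ A)⁻¹ := by
    rw [hwd]
    exact Measure.rnDeriv_withDensity μ (measurable_const.indicator hA)
  have hllr : llr μ[|A] μ =ᵐ[μ[|A]] fun _ => -Real.log (μ A).toReal := by
    filter_upwards [hac.ae_le hrn, hAe] with x hx hxA
    rw [llr, hx, Set.indicator_of_mem hxA, ENNReal.toReal_inv, Real.log_inv]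
  have hint : Integrable (llr μ[|A] μ) μ[|A] :=
    (integrable_congr hllr.symm).mp (integrable_const _)
  rw [relEntropy, if_pos ⟨hac, hint⟩]
  congr 1
  rw [integral_congr_ae hllr]
  simp

lemma transportCost_lower_aux {c : X → X → NNReal}
    (hc : Measurable fun p : X × X => c p.1 p.2) {ν₁ ν₂ : Measure X}
    [IsProbabilityMeasure ν₁]
    {A B : Set X} (hA : MeasurableSet A) (hB : MeasurableSet B)
    (h₁ : ν₁ Aᶜ = 0) (h₂ : ν₂ Bᶜ = 0) :
    (⨅ x ∈ A, ⨅ y ∈ B, (c x y : ENNReal)) ≤ transportCost c ν₁ ν₂ := by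
  refine le_iInf fun π => le_iInf fun hπ => ?_
  obtain ⟨hπ1, hπ2⟩ := hπ
  have hfst : π (Aᶜ ×ˢ Set.univ) = 0 := by
    rw [show Aᶜ ×ˢ (Set.univ : Set X) = Prod.fst ⁻¹' Aᶜ by ext p; simp]
    rw [← Measure.map_apply measurable_fst hA.compl, hπ1]
    exact h₁
  have hsnd : π (Set.univ ×ˢ Bᶜ) = 0 := by
    rw [show (Set.univ : Set X) ×ˢ Bᶜ = Prod.snd ⁻¹' Bᶜ by ext p; simp]
    rw [← Measure.map_apply measurable_snd hB.compl, hπ2]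
    exact h₂
  have huniv : π Set.univ = 1 := by
    have := congrArg (fun m : Measure X => m Set.univ) hπ1
    rw [Measure.map_apply measurable_fst MeasurableSet.univ] at this
    simpa using this
  have hAB : π (A ×ˢ B) = 1 := by
    have hcompl : π (A ×ˢ B)ᶜ = 0 := by
      have hsub : (A ×ˢ B)ᶜ ⊆ (Aᶜ ×ˢ Set.univ) ∪ (Set.univ ×ˢ Bᶜ) := by
        intro p hp
        simp only [Set.mem_compl_iff, Set.mem_prod, not_and] at hp
        by_cases h : p.1 ∈ A
        · exact Or.inr ⟨Set.mem_univ _, hp h⟩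
        · exact Or.inl ⟨h, Set.mem_univ _⟩
      exact le_antisymm (le_trans (measure_mono hsub)
        (le_trans (measure_union_le _ _) (by rw [hfst, hsnd]; simp))) zero_le
    have := measure_add_measure_compl (μ := π) (hA.prod hB)
    rw [hcompl, add_zero, huniv] at this
    exact this
  calc (⨅ x ∈ A, ⨅ y ∈ B, (c x y : ENNReal))
      = (⨅ x ∈ A, ⨅ y ∈ B, (c x y : ENNReal)) * π (A ×ˢ B) := by rw [hAB, mul_one]
    _ ≤ ∫⁻ p in A ×ˢ B, (c p.1 p.2 : ENNReal) ∂π := by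
        rw [← setLIntegral_const]
        refine setLIntegral_mono hc.coe_nnreal_ennreal fun p hp => ?_
        exact le_trans (iInf₂_le p.1 hp.1) (iInf₂_le p.2 hp.2)
    _ ≤ ∫⁻ p, (c p.1 p.2 : ENNReal) ∂π := setLIntegral_le_lintegral _ _

end Aux

open scoped ProbabilityTheory

theorem meas_mul_meas_le_exp {X : Type*} [MeasurableSpace X] [TopologicalSpace X]
    [PolishSpace X] [BorelSpace X]
    (μ : Measure X) [IsProbabilityMeasure μ] (c : X → X → NNReal)
    (hc : Measurable fun p : X × X => c p.1 p.2)
    (hsym : ∀ ν₁ ν₂ : Measure X, IsProbabilityMeasure ν₁ → IsProbabilityMeasure ν₂ →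
      (transportCost c ν₁ ν₂ : EReal)
        ≤ 2 * relEntropy ν₁ μ + 2 * relEntropy ν₂ μ) :
    ∀ A B : Set X, MeasurableSet A → MeasurableSet B → 0 < μ A → 0 < μ B →
      μ A * μ B ≤ ENNReal.ofReal
        (Real.exp (-(⨅ x ∈ A, ⨅ y ∈ B, (c x y : ENNReal)).toReal / 2)) := by
  intro A B hA hB hμA hμB
  set cAB := ⨅ x ∈ A, ⨅ y ∈ B, (c x y : ENNReal) with hcAB
  have hP1 : IsProbabilityMeasure (μ[|A]) := ProbabilityTheory.cond_isProbabilityMeasure hμA.ne'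
  have hP2 : IsProbabilityMeasure (μ[|B]) := ProbabilityTheory.cond_isProbabilityMeasure hμB.ne'
  have h₁ : μ[|A] Aᶜ = 0 := by rw [ProbabilityTheory.cond_apply hA]; simp
  have h₂ : μ[|B] Bᶜ = 0 := by rw [ProbabilityTheory.cond_apply hB]; simp
  set l₁ := Real.log (μ A).toReal
  set l₂ := Real.log (μ B).toReal
  have hkey : (cAB : EReal) ≤ (((-2 * l₁) + (-2 * l₂) : ℝ) : EReal) := by
    refine le_trans ?_ (le_of_le_of_eq (hsym (μ[|A]) (μ[|B]) hP1 hP2) ?_)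
    · exact EReal.coe_ennreal_le_coe_ennreal_iff.mpr
        (transportCost_lower_aux hc hA hB h₁ h₂)
    · rw [relEntropy_cond_aux μ hA hμA.ne', relEntropy_cond_aux μ hB hμB.ne']
      rw [show (2 : EReal) = ((2 : ℝ) : EReal) by norm_cast,
        ← EReal.coe_mul, ← EReal.coe_mul, ← EReal.coe_add]
      norm_num
      rfl
  -- cAB is finite
  obtain ⟨x, hx⟩ := nonempty_of_measure_ne_zero hμA.ne'
  obtain ⟨y, hy⟩ := nonempty_of_measure_ne_zero hμB.ne'
  have hfin : cAB ≠ ⊤ := by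
    refine ne_top_of_le_ne_top (by simp : ((c x y : ENNReal)) ≠ ⊤) ?_
    exact le_trans (iInf₂_le x hx) (iInf₂_le y hy)
  have hreal : cAB.toReal ≤ (-2 * l₁) + (-2 * l₂) := by
    have := EReal.toReal_le_toReal hkey (EReal.coe_ennreal_ne_bot _) (EReal.coe_ne_top _)
    rwa [EReal.toReal_coe_ennreal, EReal.toReal_coe] at this
  have ha : 0 < (μ A).toReal := ENNReal.toReal_pos hμA.ne' (measure_ne_top μ A)
  have hb : 0 < (μ B).toReal := ENNReal.toReal_pos hμB.ne' (measure_ne_top μ B)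
  rw [← ENNReal.ofReal_toReal (measure_ne_top μ A),
    ← ENNReal.ofReal_toReal (measure_ne_top μ B),
    ← ENNReal.ofReal_mul ENNReal.toReal_nonneg]
  refine ENNReal.ofReal_le_ofReal ?_
  have : (μ A).toReal * (μ B).toReal = Real.exp (l₁ + l₂) := by
    rw [Real.exp_add, Real.exp_log ha, Real.exp_log hb]
  rw [this]
  exact Real.exp_le_exp.mpr (by linarith)
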